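/- arXiv:0705.2499 — 3 statements merged into one kernel-verified Lean document; each statement's English description precedes it below -/
import Mathlib

section
/- Let D be a compact subset of R^d and let n(D) be the largest number of points in D that are pairwise at distance at least 1 from each other. If ρ is a finite nonnegative measure on D with total mass V, and F(ρ) = ∫∫ U(x−y) dρ(x) dρ(y) where U(r) = 1 if |r| ≤ 1 and 0 otherwise, then F(ρ) ≥ V²/n(D). -/
open MeasureTheory Metric
open scoped ENNReal

noncomputable section

/-- `packingNumber D n`: `n` is the largest number of points of `D` that are
pairwise at distance at least 1 from each other. -/
def packingNumber {X : Type*} [MetricSpace X] (D : Set X) (n : ℕ) : Prop :=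
  IsGreatest {k | ∃ s : Finset X, ↑s ⊆ D ∧
    (∀ x ∈ s, ∀ y ∈ s, x ≠ y → 1 ≤ dist x y) ∧ s.card = k} n

/-- `F ρ = ∫∫ U(x - y) dρ(x) dρ(y)` with `U` the indicator of the closed unit ball. -/
def Fen {d : ℕ} (ρ : Measure (EuclideanSpace ℝ (Fin d))) : ℝ≥0∞ :=
  ∫⁻ x, ∫⁻ y, (if dist x y ≤ 1 then 1 else 0) ∂ρ ∂ρ

lemma two_mul_le_sq_add_sq (a b : ℝ≥0∞) : 2 * a * b ≤ a ^ 2 + b ^ 2 := by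
  rcases le_total a b with h | h
  · obtain ⟨c, rfl⟩ := exists_add_of_le h
    calc 2 * a * (a + c) = a ^ 2 + (a ^ 2 + 2 * a * c) := by ring
      _ ≤ a ^ 2 + (a + c) ^ 2 := by
          gcongr
          have h2 : (a + c) ^ 2 = (a ^ 2 + 2 * a * c) + c ^ 2 := by ring
          rw [h2]; exact le_self_add
  · obtain ⟨c, rfl⟩ := exists_add_of_le h
    calc 2 * (b + c) * b = (b ^ 2 + 2 * b * c) + b ^ 2 := by ring
      _ ≤ (b + c) ^ 2 + b ^ 2 := by
          gcongr
          have h2 : (b + c) ^ 2 = (b ^ 2 + 2 * b * c) + c ^ 2 := by ring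
          rw [h2]; exact le_self_add

lemma cauchy_aux (n : ℕ) (a b : ℝ≥0∞) :
    (n : ℝ≥0∞) * (a + b) ^ 2 ≤ ((n : ℝ≥0∞) + 1) * ((n : ℝ≥0∞) * a ^ 2 + b ^ 2) := by
  have h := two_mul_le_sq_add_sq ((n : ℝ≥0∞) * a) b
  calc (n : ℝ≥0∞) * (a + b) ^ 2
      = (n : ℝ≥0∞) * a ^ 2 + (2 * ((n : ℝ≥0∞) * a) * b + (n : ℝ≥0∞) * b ^ 2) := by ring
    _ ≤ (n : ℝ≥0∞) * a ^ 2 + (((n : ℝ≥0∞) * a) ^ 2 + b ^ 2 + (n : ℝ≥0∞) * b ^ 2) := by gcongr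
    _ = ((n : ℝ≥0∞) + 1) * ((n : ℝ≥0∞) * a ^ 2 + b ^ 2) := by ring

lemma le_of_forall_eps {X Y c : ℝ≥0∞} (hc : c ≠ ∞)
    (h : ∀ ε : ℝ≥0∞, 0 < ε → ε ≠ ∞ → X ≤ Y + c * ε) : X ≤ Y := by
  rcases eq_or_ne c 0 with rfl | hc0
  · simpa using h 1 one_pos ENNReal.one_ne_top
  refine ENNReal.le_of_forall_pos_le_add fun δ hδ _ => ?_
  have hδ0 : ((δ : ℝ≥0∞)) ≠ 0 := by exact_mod_cast hδ.ne'
  have hε : X ≤ Y + c * ((δ : ℝ≥0∞) / c) :=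
    h _ (ENNReal.div_pos hδ0 hc) (by
      rw [ENNReal.div_eq_inv_mul]
      exact ENNReal.mul_ne_top (ENNReal.inv_ne_top.2 hc0) ENNReal.coe_ne_top)
  rwa [ENNReal.mul_div_cancel hc0 hc] at hε

lemma Fen_eq {d : ℕ} (ρ : Measure (EuclideanSpace ℝ (Fin d))) :
    Fen ρ = ∫⁻ x, ρ (closedBall x 1) ∂ρ := by
  refine lintegral_congr fun x => ?_
  rw [← lintegral_indicator_one measurableSet_closedBall]
  refine lintegral_congr fun y => ?_
  by_cases h : dist x y ≤ 1
  · simp [Set.indicator, mem_closedBall, h, dist_comm]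
  · simp [Set.indicator, mem_closedBall, h, dist_comm]

lemma measurable_f {d : ℕ} (ρ : Measure (EuclideanSpace ℝ (Fin d))) [SFinite ρ] :
    Measurable fun x => ρ (closedBall x 1) := by
  have hs : MeasurableSet {p : EuclideanSpace ℝ (Fin d) × EuclideanSpace ℝ (Fin d) |
      dist p.1 p.2 ≤ 1} := (isClosed_le continuous_dist continuous_const).measurableSet
  have h2 := measurable_measure_prodMk_left (ν := ρ) hs
  have heq : (fun x => ρ (closedBall x 1)) = fun x : EuclideanSpace ℝ (Fin d) =>
      ρ (Prod.mk x ⁻¹' {p : EuclideanSpace ℝ (Fin d) × EuclideanSpace ℝ (Fin d) |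
        dist p.1 p.2 ≤ 1}) := by
    funext x
    congr 1
    ext y
    simp [mem_closedBall, dist_comm]
  rw [heq]
  exact h2

lemma key {d : ℕ} (n : ℕ) :
    ∀ (ρ : Measure (EuclideanSpace ℝ (Fin d))), IsFiniteMeasure ρ →
    ∀ D : Set (EuclideanSpace ℝ (Fin d)), ρ Dᶜ = 0 →
    (∀ s : Finset (EuclideanSpace ℝ (Fin d)), ↑s ⊆ D →
      (∀ x ∈ s, ∀ y ∈ s, x ≠ y → 1 ≤ dist x y) → s.card ≤ n) →
    ρ Set.univ ^ 2 ≤ n * Fen ρ := by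
  induction n with
  | zero =>
    intro ρ hfin D hsupp hcard
    have hD : D = ∅ := by
      by_contra h
      obtain ⟨x, hx⟩ := Set.nonempty_iff_ne_empty.2 h
      have := hcard {x} (by simpa) (by simp)
      simp at this
    rw [hD, Set.compl_empty] at hsupp
    simp [hsupp]
  | succ n IH =>
    intro ρ hfin D hsupp hcard
    haveI := hfin
    classical
    by_cases hV0 : ρ Set.univ = 0
    · simp [hV0]
    set f : EuclideanSpace ℝ (Fin d) → ℝ≥0∞ := fun x => ρ (closedBall x 1) with hfdef
    set m : ℝ≥0∞ := essInf f ρ with hm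
    have hae : ∀ᵐ x ∂ρ, m ≤ f x := ae_essInf_le
    have hVfin : ρ Set.univ ≠ ∞ := measure_ne_top ρ _
    have hmfin : m ≠ ∞ := by
      haveI : (ae ρ).NeBot := ae_neBot.2 (fun h => hV0 (by simp [h]))
      obtain ⟨x, hx⟩ := hae.exists
      exact ne_top_of_le_ne_top hVfin (hx.trans (measure_mono (Set.subset_univ _)))
    -- decomposition for each ε
    have claim : ∀ ε : ℝ≥0∞, 0 < ε → ε ≠ ∞ → ∃ a b F' : ℝ≥0∞,
        a + b = ρ Set.univ ∧ b ^ 2 ≤ n * F' ∧ F' + m * a ≤ Fen ρ ∧ a ≤ m + ε := by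
      intro ε hε hεtop
      -- find a point x₁ ∈ D with f x₁ < m + ε
      have hS : ρ ({x | f x < m + ε} ∩ D) ≠ 0 := by
        intro h0
        have hsub : {x | f x < m + ε} ⊆ ({x | f x < m + ε} ∩ D) ∪ Dᶜ := by
          intro x hx
          by_cases hxD : x ∈ D
          · exact Or.inl ⟨hx, hxD⟩
          · exact Or.inr hxD
        have h1 : ρ {x | f x < m + ε} = 0 :=
          measure_mono_null hsub (le_antisymm
            (le_trans (measure_union_le _ _) (by rw [h0, hsupp]; simp)) zero_le)
        have h2 : ∀ᵐ x ∂ρ, m + ε ≤ f x := by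
          rw [ae_iff]
          simpa [not_le] using h1
        have h3 : m + ε ≤ m := le_essInf_of_ae_le _ h2
        exact absurd h3 (not_le.2 (ENNReal.lt_add_right hmfin hε.ne'))
      obtain ⟨x₁, hx₁f, hx₁D⟩ := nonempty_of_measure_ne_zero hS
      set B : Set (EuclideanSpace ℝ (Fin d)) := closedBall x₁ 1 with hB
      have hBm : MeasurableSet B := measurableSet_closedBall
      set ρ' := ρ.restrict Bᶜ with hρ'
      haveI : IsFiniteMeasure ρ' := inferInstance
      refine ⟨ρ B, ρ Bᶜ, Fen ρ', ?_, ?_, ?_, le_of_lt hx₁f⟩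
      · exact measure_add_measure_compl hBm
      · -- apply IH to ρ' and D \ B
        have h1 : ρ' (D \ B)ᶜ = 0 := by
          rw [Measure.restrict_apply' hBm.compl]
          refine measure_mono_null ?_ hsupp
          intro y hy
          rcases hy with ⟨hy1, hy2⟩
          intro hyD
          exact hy1 ⟨hyD, hy2⟩
        have h2 : ∀ s : Finset (EuclideanSpace ℝ (Fin d)), ↑s ⊆ D \ B →
            (∀ x ∈ s, ∀ y ∈ s, x ≠ y → 1 ≤ dist x y) → s.card ≤ n := by
          intro s hs hsep
          have hx₁s : x₁ ∉ s := by
            intro hmem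
            have : x₁ ∈ D \ B := hs hmem
            exact this.2 (mem_closedBall_self zero_le_one)
          have hdist : ∀ y ∈ s, 1 ≤ dist x₁ y := by
            intro y hy
            have hyB : y ∉ B := (hs hy).2
            rw [mem_closedBall, dist_comm] at hyB
            exact le_of_lt (not_le.1 hyB)
          have hcardt := hcard (insert x₁ s) ?_ ?_
          · rwa [Finset.card_insert_of_notMem hx₁s, Nat.add_le_add_iff_right] at hcardt
          · intro y hy
            rcases Finset.mem_insert.1 (by exact_mod_cast hy) with rfl | hy'
            · exact hx₁D
            · exact (hs hy').1
          · intro x hx y hy hxy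
            rcases Finset.mem_insert.1 hx with rfl | hx' <;>
              rcases Finset.mem_insert.1 hy with rfl | hy'
            · exact absurd rfl hxy
            · exact hdist y hy'
            · rw [dist_comm]; exact hdist x hx'
            · exact hsep x hx' y hy' hxy
        have := IH ρ' inferInstance (D \ B) h1 h2
        rwa [Measure.restrict_apply_univ] at this
      · -- Fen ρ' + m * ρ B ≤ Fen ρ
        rw [Fen_eq ρ]
        have hsplit : ∫⁻ x, f x ∂ρ
            = ∫⁻ x, f x ∂(ρ.restrict B) + ∫⁻ x, f x ∂ρ' := by
          rw [← lintegral_add_measure, Measure.restrict_add_restrict_compl hBm]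
        rw [hsplit, add_comm (∫⁻ x, f x ∂(ρ.restrict B))]
        gcongr
        · -- Fen ρ' ≤ ∫ f dρ'
          rw [Fen_eq ρ']
          refine lintegral_mono fun x => ?_
          exact Measure.restrict_le_self _
        · -- m * ρ B ≤ ∫ f d(ρ.restrict B)
          calc m * ρ B = ∫⁻ _, m ∂(ρ.restrict B) := by
                rw [lintegral_const, Measure.restrict_apply_univ]
            _ ≤ ∫⁻ x, f x ∂(ρ.restrict B) :=
                lintegral_mono_ae (ae_restrict_of_ae hae)
    -- numeric part
    rcases Nat.eq_zero_or_pos n with rfl | hn0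
    · -- n = 0 : V = a, V^2 ≤ Fen ρ
      refine le_of_forall_eps hVfin fun ε hε hεtop => ?_
      obtain ⟨a, b, F', hab, hb2, hF, haε⟩ := claim ε hε hεtop
      have hb0 : b = 0 := by simpa using hb2
      have ha : a = ρ Set.univ := by rw [← hab, hb0, add_zero]
      have : ρ Set.univ ^ 2 ≤ m * a + a * ε := by
        calc ρ Set.univ ^ 2 = a * a := by rw [ha]; ring
          _ ≤ (m + ε) * a := by gcongr
          _ = m * a + a * ε := by ring
      refine this.trans ?_
      have h1 : m * a ≤ Fen ρ := le_trans le_add_self hF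
      have h2 : a * ε ≤ ρ Set.univ * ε := by rw [ha]
      calc m * a + a * ε ≤ Fen ρ + ρ Set.univ * ε := add_le_add h1 h2
        _ = (0 + 1 : ℕ) * Fen ρ + ρ Set.univ * ε := by simp
    · -- n ≥ 1
      have hkey : (n : ℝ≥0∞) * ρ Set.univ ^ 2 ≤
          (n : ℝ≥0∞) * (((n : ℕ) + 1 : ℕ) * Fen ρ) := by
        have hcfin : ((n : ℝ≥0∞) * ((n : ℝ≥0∞) + 1)) * ρ Set.univ ≠ ∞ :=
          ENNReal.mul_ne_top (ENNReal.mul_ne_top (ENNReal.natCast_ne_top n)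
            (ENNReal.add_ne_top.2 ⟨ENNReal.natCast_ne_top n, ENNReal.one_ne_top⟩)) hVfin
        refine le_of_forall_eps hcfin fun ε hε hεtop => ?_
        obtain ⟨a, b, F', hab, hb2, hF, haε⟩ := claim ε hε hεtop
        have haV : a ≤ ρ Set.univ := by rw [← hab]; exact le_self_add
        calc (n : ℝ≥0∞) * ρ Set.univ ^ 2
            = (n : ℝ≥0∞) * (a + b) ^ 2 := by rw [hab]
          _ ≤ ((n : ℝ≥0∞) + 1) * ((n : ℝ≥0∞) * a ^ 2 + b ^ 2) := cauchy_aux n a b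
          _ ≤ ((n : ℝ≥0∞) + 1) * ((n : ℝ≥0∞) * (a * (m + ε)) + (n : ℝ≥0∞) * F') := by
              gcongr
              calc a ^ 2 = a * a := sq a
                _ ≤ a * (m + ε) := by gcongr
          _ = ((n : ℝ≥0∞) + 1) * (n : ℝ≥0∞) * ((m * a + F') + a * ε) := by ring
          _ ≤ ((n : ℝ≥0∞) + 1) * (n : ℝ≥0∞) * (Fen ρ + ρ Set.univ * ε) := by
              gcongr
              · rw [add_comm (m * a)]; exact hF
          _ = (n : ℝ≥0∞) * (((n : ℝ≥0∞) + 1) * Fen ρ)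
              + ((n : ℝ≥0∞) * ((n : ℝ≥0∞) + 1)) * ρ Set.univ * ε := by ring
          _ = (n : ℝ≥0∞) * (((n : ℝ≥0∞) + 1) * Fen ρ)
              + ((n : ℝ≥0∞) * ((n : ℝ≥0∞) + 1) * ρ Set.univ) * ε := by ring
          _ = (n : ℝ≥0∞) * (((n : ℕ) + 1 : ℕ) * Fen ρ)
              + ((n : ℝ≥0∞) * ((n : ℝ≥0∞) + 1)) * ρ Set.univ * ε := by
              push_cast; ring
      have := (ENNReal.mul_le_mul_iff_right (a := (n : ℝ≥0∞))
        (by exact_mod_cast hn0.ne') (ENNReal.natCast_ne_top n)).1 hkey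
      simpa using this

theorem stmt0 {d : ℕ} (D : Set (EuclideanSpace ℝ (Fin d))) (hD : IsCompact D)
    (n : ℕ) (hn : packingNumber D n)
    (ρ : Measure (EuclideanSpace ℝ (Fin d))) [IsFiniteMeasure ρ]
    (hsupp : ρ Dᶜ = 0) (V : ℝ≥0∞) (hV : ρ Set.univ = V) :
    V ^ 2 / n ≤ Fen ρ := by
  have hcard : ∀ s : Finset (EuclideanSpace ℝ (Fin d)), ↑s ⊆ D →
      (∀ x ∈ s, ∀ y ∈ s, x ≠ y → 1 ≤ dist x y) → s.card ≤ n :=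
    fun s h1 h2 => hn.2 ⟨s, h1, h2, rfl⟩
  have hkey := key n ρ inferInstance D hsupp hcard
  rw [hV] at hkey
  exact ENNReal.div_le_of_le_mul' hkey
end
end

section
/- Let u : [a,b] → R be a C¹ function with u(a) = u(b) = 0. Then ∫_a^b |u'(x)|² dx ≥ (π²/(b−a)²) ∫_a^b |u(x)|² dx. -/
open intervalIntegral

open Real Set Filter Topology in
private lemma tendsto_div_aux (S v : ℝ → ℝ) (x₀ m A : ℝ) (l : Filter ℝ) (hl : l ≤ 𝓝[≠] x₀)
    (hS : HasDerivAt S m x₀) (hv : HasDerivAt v A x₀) (hS0 : S x₀ = 0) (hv0 : v x₀ = 0)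
    (hm : m ≠ 0) (hne : ∀ᶠ x in l, S x ≠ 0) :
    Tendsto (fun x => v x / S x) l (𝓝 (A / m)) := by
  have h1 : Tendsto (slope v x₀) l (𝓝 A) :=
    (hasDerivAt_iff_tendsto_slope.1 hv).mono_left hl
  have h2 : Tendsto (slope S x₀) l (𝓝 m) :=
    (hasDerivAt_iff_tendsto_slope.1 hS).mono_left hl
  have h3 : Tendsto (fun x => slope v x₀ x / slope S x₀ x) l (𝓝 (A / m)) := h1.div h2 hm
  refine h3.congr' ?_
  have hxne : ∀ᶠ x in l, x ≠ x₀ := hl self_mem_nhdsWithin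
  filter_upwards [hne, hxne] with x hx1 hx2
  rw [slope_def_field, slope_def_field, hS0, hv0, sub_zero, sub_zero]
  have hx : x - x₀ ≠ 0 := sub_ne_zero.2 hx2
  field_simp

open Real Set Filter Topology in
theorem stmt5 (a b : ℝ) (hab : a < b) (u : ℝ → ℝ) (hu : ContDiff ℝ 1 u)
    (ha : u a = 0) (hb : u b = 0) :
    Real.pi ^ 2 / (b - a) ^ 2 * ∫ x in a..b, (u x) ^ 2 ≤ ∫ x in a..b, (deriv u x) ^ 2 := by
  have hba : (0:ℝ) < b - a := by linarith
  set c : ℝ := Real.pi / (b - a) with hc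
  have hcpos : 0 < c := div_pos Real.pi_pos hba
  have hcne : c ≠ 0 := ne_of_gt hcpos
  have hbane : b - a ≠ 0 := ne_of_gt hba
  have hcb : c * (b - a) = Real.pi := by rw [hc]; field_simp
  set S : ℝ → ℝ := fun x => Real.sin (c * (x - a)) with hSdef
  set φ : ℝ → ℝ := fun x => c * Real.cos (c * (x - a)) / S x with hφdef
  set F : ℝ → ℝ := fun x => φ x * u x ^ 2 with hFdef
  set F' : ℝ → ℝ := fun x => -(c ^ 2 + φ x ^ 2) * u x ^ 2 + φ x * (2 * u x * deriv u x)
    with hF'def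
  set g : ℝ → ℝ := fun x => (deriv u x - φ x * u x) ^ 2 with hgdef
  set h : ℝ → ℝ := fun x => (deriv u x) ^ 2 - c ^ 2 * u x ^ 2 with hhdef
  have hucont : Continuous u := hu.continuous
  have hu'cont : Continuous (deriv u) := hu.continuous_deriv le_rfl
  have hudiff : ∀ x, HasDerivAt u (deriv u x) x := fun x =>
    (hu.differentiable one_ne_zero x).hasDerivAt
  -- inner derivative
  have hinner : ∀ x : ℝ, HasDerivAt (fun y => c * (y - a)) c x := fun x => by
    simpa using ((hasDerivAt_id x).sub_const a).const_mul c
  have hSderiv : ∀ x : ℝ, HasDerivAt S (Real.cos (c * (x - a)) * c) x := fun x =>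
    (Real.hasDerivAt_sin _).comp x (hinner x)
  -- positivity of S on Ioo a b
  have hSpos : ∀ x ∈ Ioo a b, 0 < S x := by
    intro x hx
    apply Real.sin_pos_of_pos_of_lt_pi
    · have : 0 < x - a := by linarith [hx.1]
      positivity
    · have h1 : c * (x - a) < c * (b - a) := by
        apply mul_lt_mul_of_pos_left _ hcpos
        linarith [hx.2]
      linarith [hcb]
  -- derivative of φ on Ioo a b
  have hφderiv : ∀ x ∈ Ioo a b, HasDerivAt φ (-(c ^ 2 + φ x ^ 2)) x := by
    intro x hx
    have hSne : S x ≠ 0 := ne_of_gt (hSpos x hx)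
    have hcos : HasDerivAt (fun y => Real.cos (c * (y - a))) (-Real.sin (c * (x - a)) * c) x :=
      (Real.hasDerivAt_cos _).comp x (hinner x)
    have hnum : HasDerivAt (fun y => c * Real.cos (c * (y - a)))
        (c * (-Real.sin (c * (x - a)) * c)) x := hcos.const_mul c
    have hdiv : HasDerivAt φ _ x := hnum.div (hSderiv x) hSne
    convert hdiv using 1
    have pyth := Real.sin_sq_add_cos_sq (c * (x - a))
    simp only [hφdef, hSdef]
    field_simp [show Real.sin (c * (x - a)) ≠ 0 from hSne]
    ring
  -- derivative of F on Ioo a b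
  have hFderiv : ∀ x ∈ Ioo a b, HasDerivAt F (F' x) x := by
    intro x hx
    have hu2 : HasDerivAt (fun y => u y ^ 2) (2 * u x ^ 1 * deriv u x) x := by
      have hp : HasDerivAt (fun y => u y ^ 2) _ x := (hudiff x).pow 2
      simpa using hp
    have : HasDerivAt (fun y => φ y * u y ^ 2) _ x := (hφderiv x hx).mul hu2
    simpa [hF'def, pow_one] using this
  -- continuity facts
  have hhcont : Continuous h := by
    apply Continuous.sub
    · exact hu'cont.pow 2
    · exact continuous_const.mul (hucont.pow 2)
  have hhint : ∀ s t : ℝ, IntervalIntegrable h MeasureTheory.volume s t := fun s t =>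
    hhcont.intervalIntegrable s t
  -- primitive
  set G : ℝ → ℝ := fun x => ∫ y in a..x, h y with hGdef
  have hGcont : Continuous G := intervalIntegral.continuous_primitive hhint a
  -- key inequality on subintervals
  have key : ∀ s t : ℝ, a < s → s ≤ t → t < b → F t - F s ≤ G t - G s := by
    intro s t hs hst ht
    have hsub : Icc s t ⊆ Ioo a b := fun x hx => ⟨lt_of_lt_of_le hs hx.1, lt_of_le_of_lt hx.2 ht⟩
    have huicc : uIcc s t = Icc s t := uIcc_of_le hst
    have hφcont : ContinuousOn φ (Icc s t) := by
      apply ContinuousOn.div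
      · exact (continuous_const.mul (Real.continuous_cos.comp
          (continuous_const.mul (continuous_id.sub continuous_const)))).continuousOn
      · exact (Real.continuous_sin.comp
          (continuous_const.mul (continuous_id.sub continuous_const))).continuousOn
      · exact fun x hx => ne_of_gt (hSpos x (hsub hx))
    have hF'cont : ContinuousOn F' (Icc s t) := by
      apply ContinuousOn.add
      · exact ((continuousOn_const.add (hφcont.pow 2)).neg).mul (hucont.continuousOn.pow 2)
      · exact hφcont.mul ((continuousOn_const.mul hucont.continuousOn).mul
          hu'cont.continuousOn)
    have hgcont : ContinuousOn g (Icc s t) :=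
      ((hu'cont.continuousOn.sub (hφcont.mul hucont.continuousOn)).pow 2)
    have hF'int : IntervalIntegrable F' MeasureTheory.volume s t :=
      ContinuousOn.intervalIntegrable (by rw [huicc]; exact hF'cont)
    have hgint : IntervalIntegrable g MeasureTheory.volume s t :=
      ContinuousOn.intervalIntegrable (by rw [huicc]; exact hgcont)
    have eqF : ∫ x in s..t, F' x = F t - F s := by
      apply integral_eq_sub_of_hasDerivAt
      · intro x hx
        exact hFderiv x (hsub (huicc ▸ hx))
      · exact hF'int
    have hGsub : G t - G s = ∫ x in s..t, h x := by
      simp only [hGdef]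
      rw [← intervalIntegral.integral_interval_sub_left (hhint a t) (hhint a s)]
    have hsplit : ∫ x in s..t, h x = (∫ x in s..t, g x) + ∫ x in s..t, F' x := by
      rw [← intervalIntegral.integral_add hgint hF'int]
      apply intervalIntegral.integral_congr
      intro x _
      simp only [hhdef, hgdef, hF'def]
      ring
    have hgnn : 0 ≤ ∫ x in s..t, g x :=
      intervalIntegral.integral_nonneg hst (fun x _ => sq_nonneg _)
    rw [hGsub, hsplit, ← eqF]
    linarith
  -- limits of F at the endpoints
  have hSa : S a = 0 := by simp [hSdef]
  have hSb : S b = 0 := by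
    simp only [hSdef]
    rw [hcb, Real.sin_pi]
  have hSda : HasDerivAt S c a := by simpa using hSderiv a
  have hSdb : HasDerivAt S (-c) b := by
    have := hSderiv b
    rw [hcb] at this
    simpa using this
  have hIooa : Ioo a b ∈ 𝓝[>] a := Ioo_mem_nhdsGT_of_mem ⟨le_refl a, hab⟩
  have hIoob : Ioo a b ∈ 𝓝[<] b := Ioo_mem_nhdsLT_of_mem ⟨hab, le_refl b⟩
  have hFlima : Tendsto F (𝓝[>] a) (𝓝 0) := by
    have hdiv : Tendsto (fun x => u x / S x) (𝓝[>] a) (𝓝 (deriv u a / c)) := by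
      apply tendsto_div_aux S u a c (deriv u a) _ (nhdsWithin_mono _ (fun x hx => ne_of_gt hx))
        hSda (hudiff a) hSa ha hcne
      filter_upwards [hIooa] with x hx using ne_of_gt (hSpos x hx)
    have hcos : Tendsto (fun x => c * Real.cos (c * (x - a))) (𝓝[>] a) (𝓝 c) := by
      have : Continuous (fun x => c * Real.cos (c * (x - a))) :=
        continuous_const.mul (Real.continuous_cos.comp
          (continuous_const.mul (continuous_id.sub continuous_const)))
      have := (this.tendsto a).mono_left (nhdsWithin_le_nhds (s := Ioi a))
      simpa using this
    have huz : Tendsto u (𝓝[>] a) (𝓝 0) := by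
      have := (hucont.tendsto a).mono_left (nhdsWithin_le_nhds (s := Ioi a))
      rwa [ha] at this
    have hprod := (hcos.mul hdiv).mul huz
    rw [mul_zero] at hprod
    refine hprod.congr' ?_
    filter_upwards [hIooa] with x hx
    have hSne : S x ≠ 0 := ne_of_gt (hSpos x hx)
    simp only [hFdef, hφdef]
    field_simp
  have hFlimb : Tendsto F (𝓝[<] b) (𝓝 0) := by
    have hdiv : Tendsto (fun x => u x / S x) (𝓝[<] b) (𝓝 (deriv u b / (-c))) := by
      apply tendsto_div_aux S u b (-c) (deriv u b) _ (nhdsWithin_mono _ (fun x hx => ne_of_lt hx))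
        hSdb (hudiff b) hSb hb (neg_ne_zero.2 hcne)
      filter_upwards [hIoob] with x hx using ne_of_gt (hSpos x hx)
    have hcos : Tendsto (fun x => c * Real.cos (c * (x - a))) (𝓝[<] b) (𝓝 (-c)) := by
      have hcont : Continuous (fun x => c * Real.cos (c * (x - a))) :=
        continuous_const.mul (Real.continuous_cos.comp
          (continuous_const.mul (continuous_id.sub continuous_const)))
      have := (hcont.tendsto b).mono_left (nhdsWithin_le_nhds (s := Iio b))
      simpa [hcb] using this
    have huz : Tendsto u (𝓝[<] b) (𝓝 0) := by
      have := (hucont.tendsto b).mono_left (nhdsWithin_le_nhds (s := Iio b))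
      rwa [hb] at this
    have hprod := (hcos.mul hdiv).mul huz
    rw [mul_zero] at hprod
    refine hprod.congr' ?_
    filter_upwards [hIoob] with x hx
    have hSne : S x ≠ 0 := ne_of_gt (hSpos x hx)
    simp only [hFdef, hφdef]
    field_simp
  -- combine via limits as ε → 0+
  have hmapa : Tendsto (fun ε : ℝ => a + ε) (𝓝[>] 0) (𝓝[>] a) := by
    rw [tendsto_nhdsWithin_iff]
    constructor
    · have : Tendsto (fun ε : ℝ => a + ε) (𝓝 0) (𝓝 (a + 0)) :=
        (continuous_const.add continuous_id).tendsto 0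
      simpa using this.mono_left nhdsWithin_le_nhds
    · filter_upwards [self_mem_nhdsWithin] with ε (hε : 0 < ε)
      simpa using hε
  have hmapb : Tendsto (fun ε : ℝ => b - ε) (𝓝[>] 0) (𝓝[<] b) := by
    rw [tendsto_nhdsWithin_iff]
    constructor
    · have : Tendsto (fun ε : ℝ => b - ε) (𝓝 0) (𝓝 (b - 0)) :=
        (continuous_const.sub continuous_id).tendsto 0
      simpa using this.mono_left nhdsWithin_le_nhds
    · filter_upwards [self_mem_nhdsWithin] with ε (hε : 0 < ε)
      simp only [Set.mem_Iio]
      linarith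
  have limΨ : Tendsto (fun ε : ℝ => F (b - ε) - F (a + ε)) (𝓝[>] 0) (𝓝 0) := by
    have := (hFlimb.comp hmapb).sub (hFlima.comp hmapa)
    simpa using this
  have limΦ : Tendsto (fun ε : ℝ => G (b - ε) - G (a + ε)) (𝓝[>] 0) (𝓝 (G b - G a)) := by
    exact ((hGcont.tendsto b).comp (hmapb.mono_right nhdsWithin_le_nhds)).sub
      ((hGcont.tendsto a).comp (hmapa.mono_right nhdsWithin_le_nhds))
  have hev : ∀ᶠ ε in 𝓝[>] (0:ℝ), F (b - ε) - F (a + ε) ≤ G (b - ε) - G (a + ε) := by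
    have hmem : Ioo (0:ℝ) ((b - a) / 2) ∈ 𝓝[>] (0:ℝ) :=
      Ioo_mem_nhdsGT_of_mem ⟨le_refl 0, by linarith⟩
    filter_upwards [hmem] with ε hε
    exact key (a + ε) (b - ε) (by linarith [hε.1]) (by linarith [hε.2]) (by linarith [hε.1])
  have hmain : (0:ℝ) ≤ G b - G a :=
    le_of_tendsto_of_tendsto limΨ limΦ hev
  have hGa : G a = 0 := intervalIntegral.integral_same
  have hG0 : 0 ≤ ∫ x in a..b, h x := by
    rw [hGa, sub_zero] at hmain
    exact hmain
  -- unfold h and conclude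
  have hu2int : IntervalIntegrable (fun x => u x ^ 2) MeasureTheory.volume a b :=
    (hucont.pow 2).intervalIntegrable a b
  have hu'2int : IntervalIntegrable (fun x => (deriv u x) ^ 2) MeasureTheory.volume a b :=
    (hu'cont.pow 2).intervalIntegrable a b
  have hsplit : ∫ x in a..b, h x =
      (∫ x in a..b, (deriv u x) ^ 2) - c ^ 2 * ∫ x in a..b, u x ^ 2 := by
    simp only [hhdef]
    rw [intervalIntegral.integral_sub hu'2int (hu2int.const_mul (c ^ 2)),
      intervalIntegral.integral_const_mul]
  have hcsq : c ^ 2 = Real.pi ^ 2 / (b - a) ^ 2 := by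
    rw [hc, div_pow]
  rw [hsplit, hcsq] at hG0
  linarith
end

section
/- Let n ≥ 1 and L > 0 with L not an integer and n = ⌊L⌋+1, l = (L−n+1)/n. Among all choices of n disjoint closed intervals [a_i, b_i] ⊂ [0, L] with b_i + 1 ≤ a_{i+1}, the quantity Σ_{i=1}^n 1/(b_i − a_i)² is minimized when all intervals have the common length l, and the minimum value is n/l² = n³/(L−n+1)². -/
theorem stmt17 (L : ℝ) (hL : 0 < L) (hLnotint : ¬ ∃ m : ℤ, L = m)
    (n : ℕ) (hn1 : 1 ≤ n) (hn : n = ⌊L⌋₊ + 1) (l : ℝ) (hl : l = (L - n + 1) / n)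
    (a b : ℕ → ℝ)
    (hab : ∀ i < n, a i < b i) (ha0 : ∀ i < n, 0 ≤ a i) (hbL : ∀ i < n, b i ≤ L)
    (hgap : ∀ i, i + 1 < n → b i + 1 ≤ a (i + 1)) :
    (n : ℝ) ^ 3 / (L - n + 1) ^ 2 ≤ ∑ i ∈ Finset.range n, 1 / (b i - a i) ^ 2 ∧
      ((∀ i < n, b i - a i = l) →
        (∑ i ∈ Finset.range n, 1 / (b i - a i) ^ 2) = n / l ^ 2 ∧
          (n : ℝ) / l ^ 2 = (n : ℝ) ^ 3 / (L - n + 1) ^ 2) := by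
  have hnpos : (0:ℝ) < n := by exact_mod_cast hn1
  have hfloor_le : (⌊L⌋₊ : ℝ) ≤ L := Nat.floor_le hL.le
  have hfloor_lt : (⌊L⌋₊ : ℝ) < L := by
    rcases lt_or_eq_of_le hfloor_le with h | h
    · exact h
    · exact absurd ⟨(⌊L⌋₊ : ℤ), by exact_mod_cast h.symm⟩ hLnotint
  have hLn : 0 < L - n + 1 := by
    have : (n : ℝ) = (⌊L⌋₊ : ℝ) + 1 := by rw [hn]; push_cast; ring
    rw [this]; linarith
  have hd : ∀ i ∈ Finset.range n, 0 < b i - a i := fun i hi =>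
    sub_pos.mpr (hab i (Finset.mem_range.mp hi))
  -- total length bound
  have key : ∀ k, k < n → a 0 + (∑ i ∈ Finset.range (k+1), (b i - a i)) + k ≤ b k := by
    intro k
    induction k with
    | zero => intro _; simp
    | succ k ih =>
      intro hk
      have hk' : k < n := Nat.lt_of_succ_lt hk
      have h1 := ih hk'
      have h2 := hgap k hk
      rw [Finset.sum_range_succ]
      push_cast
      linarith
  have hsum : ∑ i ∈ Finset.range n, (b i - a i) ≤ L - n + 1 := by
    have hn' : n - 1 + 1 = n := Nat.succ_pred_eq_of_pos hn1
    have hk := key (n-1) (by omega)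
    rw [hn'] at hk
    have hb := hbL (n-1) (by omega)
    have ha := ha0 0 (by omega)
    have hc : ((n-1 : ℕ) : ℝ) = (n : ℝ) - 1 := by
      push_cast [Nat.cast_sub hn1]; ring
    rw [hc] at hk
    linarith
  have hsumpos : 0 < ∑ i ∈ Finset.range n, (b i - a i) :=
    Finset.sum_pos hd ⟨0, Finset.mem_range.mpr (by omega)⟩
  set S := ∑ i ∈ Finset.range n, (b i - a i) with hS
  -- Cauchy-Schwarz (Engel form) twice
  have h1 : (n:ℝ)^2 / S ≤ ∑ i ∈ Finset.range n, 1 / (b i - a i) := by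
    have := Finset.sq_sum_div_le_sum_sq_div (Finset.range n) (fun _ => (1:ℝ)) hd
    simpa [hS, Finset.sum_sub_distrib] using this
  have h2 : (∑ i ∈ Finset.range n, 1 / (b i - a i))^2 / n ≤
      ∑ i ∈ Finset.range n, 1 / (b i - a i)^2 := by
    have := Finset.sq_sum_div_le_sum_sq_div (Finset.range n)
      (fun i => 1 / (b i - a i)) (g := fun _ => (1:ℝ)) (fun i _ => one_pos)
    simpa [div_pow] using this
  have hsum1pos : 0 ≤ ∑ i ∈ Finset.range n, 1 / (b i - a i) :=
    Finset.sum_nonneg fun i hi => le_of_lt (by have := hd i hi; positivity)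
  have hmain : (n : ℝ) ^ 3 / (L - n + 1) ^ 2 ≤
      ∑ i ∈ Finset.range n, 1 / (b i - a i) ^ 2 := by
    have e1 : (n:ℝ)^3 / S^2 = ((n:ℝ)^2 / S)^2 / n := by
      field_simp
    have e2 : (n:ℝ)^3 / (L - n + 1)^2 ≤ (n:ℝ)^3 / S^2 := by
      apply div_le_div_of_nonneg_left (by positivity) (by positivity)
      exact pow_le_pow_left₀ hsumpos.le hsum 2
    have e3 : ((n:ℝ)^2 / S)^2 / n ≤
        (∑ i ∈ Finset.range n, 1 / (b i - a i))^2 / n := by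
      apply div_le_div_of_nonneg_right ?_ hnpos.le
      exact pow_le_pow_left₀ (by positivity) h1 2
    calc (n : ℝ) ^ 3 / (L - n + 1) ^ 2 ≤ (n:ℝ)^3 / S^2 := e2
      _ = ((n:ℝ)^2 / S)^2 / n := e1
      _ ≤ (∑ i ∈ Finset.range n, 1 / (b i - a i))^2 / n := e3
      _ ≤ _ := h2
  refine ⟨hmain, fun heq => ?_⟩
  have hlpos : 0 < l := by rw [hl]; positivity
  constructor
  · rw [Finset.sum_congr rfl fun i hi => by
      rw [heq i (Finset.mem_range.mp hi)]]
    simp [Finset.sum_const, mul_comm]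
    ring
  · rw [hl]
    field_simp
end
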